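/- Assume the observation-driven model with the function g satisfying the contraction condition with a + b < 1, and let π be the unique stationary distribution of the conditional mean Markov chain {X_t}. If the chain starts from π, i.e. X_1 ∼ π, then the observation process {Y_t, t ≥ 1} is a (strictly) stationary time series. -/

import Mathlib

open MeasureTheory Filter

noncomputable section

/-- The one-parameter exponential family distribution with natural parameter `η`:
the measure with density `y ↦ exp (η y − A η) * h y` with respect to the base measure `μ`. -/
def expFam (μ : Measure ℝ) (A h : ℝ → ℝ) (η : ℝ) : Measure ℝ :=
  μ.withDensity fun y => ENNReal.ofReal (Real.exp (η * y - A η) * h y)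

/-- The generalized inverse CDF `F_x⁻¹(u) = inf {t ≥ 0 : F_x t ≥ u}`, where `F_x` is the
CDF of the exponential family member with mean `x = B(η)`. -/
def qtl (μ : Measure ℝ) (A h B : ℝ → ℝ) (x u : ℝ) : ℝ :=
  sInf {t : ℝ | 0 ≤ t ∧ ENNReal.ofReal u ≤ expFam μ A h (Function.invFun B x) (Set.Iic t)}

/-- The iterated random function `f_u(x) = g (x, F_x⁻¹(u))`. -/
def irf (μ : Measure ℝ) (A h B : ℝ → ℝ) (g : ℝ → ℝ → ℝ) (u x : ℝ) : ℝ :=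
  g x (qtl μ A h B x u)

/-- The forward process `X_n(x) = (f_{U_n} ∘ ⋯ ∘ f_{U_1}) (x)`. -/
def fwd {Ω : Type*} (μ : Measure ℝ) (A h B : ℝ → ℝ) (g : ℝ → ℝ → ℝ) (U : ℕ → Ω → ℝ) :
    ℕ → ℝ → Ω → ℝ
  | 0 => fun x _ => x
  | n + 1 => fun x ω => irf μ A h B g (U (n + 1) ω) (fwd μ A h B g U n x ω)

/-- The backward process `Z_n(x) = (f_{U_1} ∘ ⋯ ∘ f_{U_n}) (x)`. -/
def bwd {Ω : Type*} (μ : Measure ℝ) (A h B : ℝ → ℝ) (g : ℝ → ℝ → ℝ) (U : ℕ → Ω → ℝ) :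
    ℕ → ℝ → Ω → ℝ
  | 0 => fun x _ => x
  | n + 1 => fun x ω => bwd μ A h B g U n (irf μ A h B g (U (n + 1) ω) x) ω

/-- The uniform distribution on `(0,1)`. -/
def unif01 : Measure ℝ := volume.restrict (Set.Ioo (0 : ℝ) 1)

/-- `π` is a stationary distribution of the Markov chain `X_t = g (X_{t−1}, Y_{t−1})`,
realized through the iterated random functions `f_u` driven by iid Uniform(0,1) inputs. -/
def IsStationaryDist (μ : Measure ℝ) (A h B : ℝ → ℝ) (g : ℝ → ℝ → ℝ) (π : Measure ℝ) : Prop :=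
  Measure.map (fun p : ℝ × ℝ => irf μ A h B g p.2 p.1) (π.prod unif01) = π

end


section AuxLemmas

open Set
open scoped ENNReal NNReal Topology

noncomputable section





def gmAux (g : ℝ → ℝ → ℝ) (x y : ℝ) : ℝ := g (max x 0) (max y 0)

def psiAux (μ : Measure ℝ) (A h B : ℝ → ℝ) (S : Set ℝ) (q : ℝ) (x : ℝ) : ℝ≥0∞ :=
  ⨆ p : {x' : ℝ // x' ∈ S ∧ x' ≤ x}, ENNReal.ofReal (qtl μ A h B p.1 q)

def QmAux (μ : Measure ℝ) (A h B : ℝ → ℝ) (S : Set ℝ) (x u : ℝ) : ℝ :=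
  (⨆ q : ℚ, if 0 < (q : ℝ) ∧ (q : ℝ) < u then psiAux μ A h B S q x else 0).toReal

def irfmAux (μ : Measure ℝ) (A h B : ℝ → ℝ) (g : ℝ → ℝ → ℝ) (S : Set ℝ) (u x : ℝ) : ℝ :=
  gmAux g x (QmAux μ A h B S x u)

def dIter (μ : Measure ℝ) (A h B : ℝ → ℝ) (g : ℝ → ℝ → ℝ) (S : Set ℝ) :
    (ℕ → ℝ) → ℕ → ℝ → ℝ
  | _, 0, x => x
  | u, n + 1, x => irfmAux μ A h B g S (u n) (dIter μ A h B g S u n x)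

def PhiMap (μ : Measure ℝ) (A h B : ℝ → ℝ) (g : ℝ → ℝ → ℝ) (S : Set ℝ) :
    ℝ × (ℕ → ℝ) × (ℕ → ℝ) → ℕ → ℝ :=
  fun p t => QmAux μ A h B S (dIter μ A h B g S p.2.1 t p.1) (p.2.2 t)

lemma qtl_nonneg (μ : Measure ℝ) (A h B : ℝ → ℝ) (x u : ℝ) : 0 ≤ qtl μ A h B x u :=
  Real.sInf_nonneg fun _ ht => ht.1

lemma monotone_psiAux (μ : Measure ℝ) (A h B : ℝ → ℝ) (S : Set ℝ) (q : ℝ) :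
    Monotone (psiAux μ A h B S q) := by
  intro x y hxy
  exact iSup_le fun p => le_iSup_of_le ⟨p.1, p.2.1, p.2.2.trans hxy⟩ le_rfl

lemma measurable_QmAux (μ : Measure ℝ) (A h B : ℝ → ℝ) (S : Set ℝ) :
    Measurable (fun p : ℝ × ℝ => QmAux μ A h B S p.1 p.2) := by
  apply Measurable.ennreal_toReal
  apply Measurable.iSup
  intro q
  refine Measurable.ite ?_ (((monotone_psiAux μ A h B S q).measurable).comp measurable_fst)
    measurable_const
  have : {p : ℝ × ℝ | 0 < (q : ℝ) ∧ (q : ℝ) < p.2}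
      = {p : ℝ × ℝ | 0 < (q : ℝ)} ∩ {p : ℝ × ℝ | (q : ℝ) < p.2} := rfl
  rw [this]
  exact (MeasurableSet.const _).inter (measurableSet_lt measurable_const measurable_snd)

lemma measurable_gmAux (g : ℝ → ℝ → ℝ) (a b : ℝ) (ha : 0 ≤ a) (hb : 0 ≤ b)
    (hcontr : ∀ x x' y y' : ℝ, 0 ≤ x → 0 ≤ x' → 0 ≤ y → 0 ≤ y' →
      |g x y - g x' y'| ≤ a * |x - x'| + b * |y - y'|) :
    Measurable (fun p : ℝ × ℝ => gmAux g p.1 p.2) := by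
  have hlip : LipschitzWith (Real.toNNReal (a + b)) (fun p : ℝ × ℝ => gmAux g p.1 p.2) := by
    rw [lipschitzWith_iff_dist_le_mul]
    intro p q
    have h1 : |gmAux g p.1 p.2 - gmAux g q.1 q.2|
        ≤ a * |max p.1 0 - max q.1 0| + b * |max p.2 0 - max q.2 0| :=
      hcontr _ _ _ _ (le_max_right _ _) (le_max_right _ _) (le_max_right _ _) (le_max_right _ _)
    have h2 : |max p.1 0 - max q.1 0| ≤ |p.1 - q.1| := abs_max_sub_max_le_abs _ _ _
    have h3 : |max p.2 0 - max q.2 0| ≤ |p.2 - q.2| := abs_max_sub_max_le_abs _ _ _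
    have hd : dist (gmAux g p.1 p.2) (gmAux g q.1 q.2) ≤ a * |p.1 - q.1| + b * |p.2 - q.2| := by
      rw [Real.dist_eq]
      refine h1.trans (add_le_add (mul_le_mul_of_nonneg_left h2 ha)
        (mul_le_mul_of_nonneg_left h3 hb))
    refine hd.trans ?_
    rw [Real.coe_toNNReal _ (by linarith), Prod.dist_eq]
    have e1 : |p.1 - q.1| ≤ max (dist p.1 q.1) (dist p.2 q.2) := by
      rw [← Real.dist_eq]; exact le_max_left _ _
    have e2 : |p.2 - q.2| ≤ max (dist p.1 q.1) (dist p.2 q.2) := by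
      rw [← Real.dist_eq]; exact le_max_right _ _
    have hmax : (0:ℝ) ≤ max (dist p.1 q.1) (dist p.2 q.2) :=
      le_trans dist_nonneg (le_max_left _ _)
    nlinarith [mul_le_mul_of_nonneg_left e1 ha, mul_le_mul_of_nonneg_left e2 hb]
  exact hlip.continuous.measurable

lemma measurable_dIter (μ : Measure ℝ) (A h B : ℝ → ℝ) (g : ℝ → ℝ → ℝ) (S : Set ℝ)
    (hgm : Measurable (fun p : ℝ × ℝ => gmAux g p.1 p.2)) (t : ℕ) :
    Measurable (fun p : ℝ × (ℕ → ℝ) => dIter μ A h B g S p.2 t p.1) := by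
  induction t with
  | zero => exact measurable_fst
  | succ n ih =>
    have hQ := measurable_QmAux μ A h B S
    show Measurable fun p : ℝ × (ℕ → ℝ) =>
      gmAux g (dIter μ A h B g S p.2 n p.1)
        (QmAux μ A h B S (dIter μ A h B g S p.2 n p.1) (p.2 n))
    exact hgm.comp (ih.prodMk (hQ.comp (ih.prodMk
      ((measurable_pi_apply n).comp measurable_snd))))

lemma measurable_PhiMap (μ : Measure ℝ) (A h B : ℝ → ℝ) (g : ℝ → ℝ → ℝ) (S : Set ℝ)
    (hgm : Measurable (fun p : ℝ × ℝ => gmAux g p.1 p.2)) :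
    Measurable (PhiMap μ A h B g S) := by
  apply measurable_pi_lambda
  intro t
  have hQ := measurable_QmAux μ A h B S
  show Measurable fun p : ℝ × (ℕ → ℝ) × (ℕ → ℝ) =>
    QmAux μ A h B S (dIter μ A h B g S p.2.1 t p.1) (p.2.2 t)
  exact hQ.comp (((measurable_dIter μ A h B g S hgm t).comp
    (measurable_fst.prodMk (measurable_fst.comp measurable_snd))).prodMk
    ((measurable_pi_apply t).comp (measurable_snd.comp measurable_snd)))

lemma dIter_succ_shift (μ : Measure ℝ) (A h B : ℝ → ℝ) (g : ℝ → ℝ → ℝ) (S : Set ℝ)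
    (u : ℕ → ℝ) (t : ℕ) (x : ℝ) :
    dIter μ A h B g S u (t + 1) x
      = dIter μ A h B g S (fun n => u (n + 1)) t (irfmAux μ A h B g S (u 0) x) := by
  induction t with
  | zero => rfl
  | succ n ih =>
    show irfmAux μ A h B g S (u (n + 1)) (dIter μ A h B g S u (n + 1) x) = _
    rw [ih]; rfl





lemma map_pi_of_cylinders {ι : Type*} [Countable ι] {Ω Ω' : Type*}
    [MeasurableSpace Ω] [MeasurableSpace Ω']
    (P : Measure Ω) (P' : Measure Ω') [IsProbabilityMeasure P] [IsProbabilityMeasure P']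
    (F : ι → Ω → ℝ) (G : ι → Ω' → ℝ) (hF : ∀ i, Measurable (F i)) (hG : ∀ i, Measurable (G i))
    (hcyl : ∀ (s : Finset ι) (A : ι → Set ℝ), (∀ i ∈ s, MeasurableSet (A i)) →
      P (⋂ i ∈ s, F i ⁻¹' A i) = P' (⋂ i ∈ s, G i ⁻¹' A i)) :
    Measure.map (fun ω i => F i ω) P = Measure.map (fun ω i => G i ω) P' := by
  have hFm : Measurable fun ω i => F i ω := measurable_pi_lambda _ hF
  have hGm : Measurable fun ω i => G i ω := measurable_pi_lambda _ hG
  have hpF : IsProbabilityMeasure (Measure.map (fun ω i => F i ω) P) :=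
    Measure.isProbabilityMeasure_map hFm.aemeasurable
  have hpG : IsProbabilityMeasure (Measure.map (fun ω i => G i ω) P') :=
    Measure.isProbabilityMeasure_map hGm.aemeasurable
  refine ext_of_generate_finite
    (squareCylinders fun _ : ι => {s : Set ℝ | MeasurableSet s})
    generateFrom_squareCylinders.symm
    (isPiSystem_squareCylinders (fun _ => MeasurableSpace.isPiSystem_measurableSet) (fun _ => (MeasurableSet.univ : MeasurableSet (univ : Set ℝ))))
    ?_ (by rw [hpF.measure_univ, hpG.measure_univ])
  rintro s ⟨I, t, ht, rfl⟩
  simp only [mem_univ_pi, mem_setOf_eq] at ht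
  have hmeas : MeasurableSet ((I : Set ι).pi t) :=
    MeasurableSet.pi I.countable_toSet (fun i _ => ht i)
  rw [Measure.map_apply hFm hmeas, Measure.map_apply hGm hmeas]
  have h1 : (fun ω i => F i ω) ⁻¹' ((I : Set ι).pi t) = ⋂ i ∈ I, F i ⁻¹' t i := by
    ext ω; simp [Set.mem_pi]
  have h2 : (fun ω i => G i ω) ⁻¹' ((I : Set ι).pi t) = ⋂ i ∈ I, G i ⁻¹' t i := by
    ext ω; simp [Set.mem_pi]
  rw [h1, h2]
  exact hcyl I t (fun i _ => ht i)

lemma indep_cyl {Ω : Type*} [MeasurableSpace Ω] {P : Measure Ω} {ι κ : Type*}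
    {f : ι → Ω → ℝ} (hind : ProbabilityTheory.iIndepFun f P)
    (r : κ → ι) (rinv : ι → κ) (hrr : ∀ i, rinv (r i) = i)
    (s : Finset κ) (A : κ → Set ℝ) (hA : ∀ i ∈ s, MeasurableSet (A i)) :
    P (⋂ i ∈ s, f (r i) ⁻¹' A i) = ∏ i ∈ s, P (f (r i) ⁻¹' A i) := by
  classical
  have hrinj : Function.Injective r := fun x y hxy => by rw [← hrr x, hxy, hrr]
  have h1 : (⋂ i ∈ s, f (r i) ⁻¹' A i) = ⋂ j ∈ s.image r, f j ⁻¹' A (rinv j) := by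
    ext ω
    simp only [Set.mem_iInter, Finset.mem_image, forall_exists_index, and_imp]
    constructor
    · rintro H j i hi rfl
      rw [hrr]; exact H i hi
    · intro H i hi
      have := H (r i) i hi rfl
      rwa [hrr] at this
  rw [h1, hind.measure_inter_preimage_eq_mul (s.image r) (fun j hj => by
    obtain ⟨i, hi, rfl⟩ := Finset.mem_image.mp hj
    rw [hrr]; exact hA i hi)]
  rw [Finset.prod_image (fun x _ y _ hxy => hrinj hxy)]
  exact Finset.prod_congr rfl fun i _ => by rw [hrr]







section Quantile

variable (μ : Measure ℝ) (A h B : ℝ → ℝ) (S : Set ℝ)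

lemma expFam_Iic_mono (hB : StrictMono B) (hSB : S ⊆ Set.range B)
    (hprob : ∀ x ∈ S, IsProbabilityMeasure (expFam μ A h (Function.invFun B x)))
    {x x' : ℝ} (hx : x ∈ S) (hx' : x' ∈ S) (hxx : x ≤ x') (t : ℝ) :
    expFam μ A h (Function.invFun B x') (Set.Iic t)
      ≤ expFam μ A h (Function.invFun B x) (Set.Iic t) := by
  obtain ⟨η, hη⟩ := hSB hx
  obtain ⟨η', hη'⟩ := hSB hx'
  have hinv : Function.invFun B x = η := by
    rw [← hη]; exact Function.leftInverse_invFun hB.injective η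
  have hinv' : Function.invFun B x' = η' := by
    rw [← hη']; exact Function.leftInverse_invFun hB.injective η'
  have hprobx := hprob x hx
  have hprobx' := hprob x' hx'
  rw [hinv] at hprobx
  rw [hinv'] at hprobx'
  rw [hinv, hinv']
  have hηle : η ≤ η' := by
    rw [← hB.le_iff_le, hη, hη']; exact hxx
  set c : ℝ := A η' - A η with hc
  set E : ℝ≥0∞ := ENNReal.ofReal (Real.exp ((η' - η) * t - c)) with hE
  have hpt : ∀ y : ℝ, ENNReal.ofReal (Real.exp (η' * y - A η') * h y)
      = ENNReal.ofReal (Real.exp ((η' - η) * y - c))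
        * ENNReal.ofReal (Real.exp (η * y - A η) * h y) := by
    intro y
    rw [← ENNReal.ofReal_mul (Real.exp_nonneg _)]
    congr 1
    rw [← mul_assoc, ← Real.exp_add]
    rw [hc]; ring_nf
  have key1 : expFam μ A h η' (Set.Iic t) ≤ E * expFam μ A h η (Set.Iic t) := by
    simp only [expFam]
    rw [withDensity_apply _ measurableSet_Iic, withDensity_apply _ measurableSet_Iic]
    calc ∫⁻ y in Set.Iic t, ENNReal.ofReal (Real.exp (η' * y - A η') * h y) ∂μ
        = ∫⁻ y, (Set.Iic t).indicator
            (fun y => ENNReal.ofReal (Real.exp (η' * y - A η') * h y)) y ∂μ := by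
          rw [lintegral_indicator measurableSet_Iic]
      _ ≤ ∫⁻ y, (Set.Iic t).indicator
            (fun y => E * ENNReal.ofReal (Real.exp (η * y - A η) * h y)) y ∂μ := by
          refine lintegral_mono fun y => ?_
          rw [Set.indicator_apply, Set.indicator_apply]
          split_ifs with hy
          · rw [hpt y]
            refine mul_le_mul_left (ENNReal.ofReal_le_ofReal ?_) _
            refine Real.exp_le_exp.mpr ?_
            have : (η' - η) * y ≤ (η' - η) * t :=
              mul_le_mul_of_nonneg_left hy (sub_nonneg.2 hηle)
            linarith
          · exact le_rfl
      _ = ∫⁻ y in Set.Iic t, E * ENNReal.ofReal (Real.exp (η * y - A η) * h y) ∂μ := by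
          rw [lintegral_indicator measurableSet_Iic]
      _ = E * ∫⁻ y in Set.Iic t, ENNReal.ofReal (Real.exp (η * y - A η) * h y) ∂μ :=
          lintegral_const_mul' _ _ ENNReal.ofReal_ne_top
  have key2 : E * expFam μ A h η (Set.Ioi t) ≤ expFam μ A h η' (Set.Ioi t) := by
    simp only [expFam]
    rw [withDensity_apply _ measurableSet_Ioi, withDensity_apply _ measurableSet_Ioi]
    calc E * ∫⁻ y in Set.Ioi t, ENNReal.ofReal (Real.exp (η * y - A η) * h y) ∂μ
        = ∫⁻ y in Set.Ioi t, E * ENNReal.ofReal (Real.exp (η * y - A η) * h y) ∂μ :=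
          (lintegral_const_mul' _ _ ENNReal.ofReal_ne_top).symm
      _ = ∫⁻ y, (Set.Ioi t).indicator
            (fun y => E * ENNReal.ofReal (Real.exp (η * y - A η) * h y)) y ∂μ := by
          rw [lintegral_indicator measurableSet_Ioi]
      _ ≤ ∫⁻ y, (Set.Ioi t).indicator
            (fun y => ENNReal.ofReal (Real.exp (η' * y - A η') * h y)) y ∂μ := by
          refine lintegral_mono fun y => ?_
          rw [Set.indicator_apply, Set.indicator_apply]
          split_ifs with hy
          · rw [hpt y]
            refine mul_le_mul_left (ENNReal.ofReal_le_ofReal ?_) _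
            refine Real.exp_le_exp.mpr ?_
            have : (η' - η) * t ≤ (η' - η) * y :=
              mul_le_mul_of_nonneg_left (le_of_lt hy) (sub_nonneg.2 hηle)
            linarith
          · exact le_rfl
      _ = ∫⁻ y in Set.Ioi t, ENNReal.ofReal (Real.exp (η' * y - A η') * h y) ∂μ := by
          rw [lintegral_indicator measurableSet_Ioi]
  have huniv : expFam μ A h η (Set.Iic t) + expFam μ A h η (Set.Ioi t) = 1 := by
    rw [← measure_union (Set.Iic_disjoint_Ioi le_rfl) measurableSet_Ioi, Set.Iic_union_Ioi,
      measure_univ]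
  have huniv' : expFam μ A h η' (Set.Iic t) + expFam μ A h η' (Set.Ioi t) = 1 := by
    rw [← measure_union (Set.Iic_disjoint_Ioi le_rfl) measurableSet_Ioi, Set.Iic_union_Ioi,
      measure_univ]
  have hmid : expFam μ A h η' (Set.Iic t) * expFam μ A h η (Set.Ioi t)
      ≤ expFam μ A h η (Set.Iic t) * expFam μ A h η' (Set.Ioi t) := by
    calc expFam μ A h η' (Set.Iic t) * expFam μ A h η (Set.Ioi t)
        ≤ (E * expFam μ A h η (Set.Iic t)) * expFam μ A h η (Set.Ioi t) :=
          mul_le_mul_left key1 _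
      _ = expFam μ A h η (Set.Iic t) * (E * expFam μ A h η (Set.Ioi t)) := by ring
      _ ≤ expFam μ A h η (Set.Iic t) * expFam μ A h η' (Set.Ioi t) := mul_le_mul_right key2 _
  calc expFam μ A h η' (Set.Iic t)
      = expFam μ A h η' (Set.Iic t)
        * (expFam μ A h η (Set.Iic t) + expFam μ A h η (Set.Ioi t)) := by rw [huniv, mul_one]
    _ = expFam μ A h η' (Set.Iic t) * expFam μ A h η (Set.Iic t)
        + expFam μ A h η' (Set.Iic t) * expFam μ A h η (Set.Ioi t) := mul_add _ _ _
    _ ≤ expFam μ A h η' (Set.Iic t) * expFam μ A h η (Set.Iic t)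
        + expFam μ A h η (Set.Iic t) * expFam μ A h η' (Set.Ioi t) := add_le_add le_rfl hmid
    _ = expFam μ A h η (Set.Iic t)
        * (expFam μ A h η' (Set.Iic t) + expFam μ A h η' (Set.Ioi t)) := by ring
    _ = expFam μ A h η (Set.Iic t) := by rw [huniv', mul_one]

lemma qtl_set_nonempty
    (hprob : ∀ x ∈ S, IsProbabilityMeasure (expFam μ A h (Function.invFun B x)))
    {x u : ℝ} (hx : x ∈ S) (hu : u < 1) :
    {t : ℝ | 0 ≤ t ∧ ENNReal.ofReal u ≤ expFam μ A h (Function.invFun B x) (Set.Iic t)}.Nonempty := by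
  haveI := hprob x hx
  have h1 : Tendsto (fun t : ℝ => expFam μ A h (Function.invFun B x) (Set.Iic t)) atTop
      (𝓝 (expFam μ A h (Function.invFun B x) Set.univ)) := tendsto_measure_Iic_atTop _
  rw [measure_univ] at h1
  have h2 : ENNReal.ofReal u < 1 := by
    by_cases hu0 : 0 ≤ u
    · rw [← ENNReal.ofReal_one]; exact ENNReal.ofReal_lt_ofReal_iff_of_nonneg hu0 |>.mpr hu
    · push_neg at hu0
      rw [ENNReal.ofReal_eq_zero.mpr hu0.le]; exact zero_lt_one
  have h3 := h1.eventually (Ioi_mem_nhds h2)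
  obtain ⟨t, ht1, ht2⟩ := (h3.and (eventually_ge_atTop (0 : ℝ))).exists
  exact ⟨t, ht2, le_of_lt ht1⟩

lemma qtl_mono_x (hB : StrictMono B) (hSB : S ⊆ Set.range B)
    (hprob : ∀ x ∈ S, IsProbabilityMeasure (expFam μ A h (Function.invFun B x)))
    {u : ℝ} (hu1 : u < 1) {x x' : ℝ} (hx : x ∈ S) (hx' : x' ∈ S) (hxx : x ≤ x') :
    qtl μ A h B x u ≤ qtl μ A h B x' u := by
  refine csInf_le_csInf ⟨0, fun t ht => ht.1⟩ (qtl_set_nonempty μ A h B S hprob hx' hu1) ?_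
  intro t ht
  exact ⟨ht.1, ht.2.trans (expFam_Iic_mono μ A h B S hB hSB hprob hx hx' hxx t)⟩

lemma qtl_mono_u
    (hprob : ∀ x ∈ S, IsProbabilityMeasure (expFam μ A h (Function.invFun B x)))
    {x : ℝ} (hx : x ∈ S) {u u' : ℝ} (huu : u ≤ u') (hu1 : u' < 1) :
    qtl μ A h B x u ≤ qtl μ A h B x u' := by
  refine csInf_le_csInf ⟨0, fun t ht => ht.1⟩ (qtl_set_nonempty μ A h B S hprob hx hu1) ?_
  intro t ht
  exact ⟨ht.1, le_trans (ENNReal.ofReal_le_ofReal huu) ht.2⟩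

lemma qtl_attain
    (hprob : ∀ x ∈ S, IsProbabilityMeasure (expFam μ A h (Function.invFun B x)))
    {x u : ℝ} (hx : x ∈ S) (hu1 : u < 1) :
    ENNReal.ofReal u ≤ expFam μ A h (Function.invFun B x) (Set.Iic (qtl μ A h B x u)) := by
  haveI := hprob x hx
  set T := {t : ℝ | 0 ≤ t ∧ ENNReal.ofReal u ≤ expFam μ A h (Function.invFun B x) (Set.Iic t)}
    with hT
  have hTne : T.Nonempty := qtl_set_nonempty μ A h B S hprob hx hu1
  set c := sInf T with hcdef
  have hanti : Antitone fun n : ℕ => Set.Iic (c + 1 / (n + 1 : ℝ)) := by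
    intro m n hmn
    apply Set.Iic_subset_Iic.2
    have h1 : ((m : ℝ) + 1) ≤ ((n : ℝ) + 1) := by exact_mod_cast Nat.succ_le_succ hmn
    have h2 : (1 : ℝ) / (n + 1) ≤ 1 / (m + 1) := one_div_le_one_div_of_le (by positivity) h1
    linarith
  have hInter : (⋂ n : ℕ, Set.Iic (c + 1 / (n + 1 : ℝ))) = Set.Iic c := by
    ext y
    simp only [Set.mem_iInter, Set.mem_Iic]
    constructor
    · intro H
      by_contra hyc
      push_neg at hyc
      obtain ⟨n, hn⟩ := exists_nat_one_div_lt (sub_pos.2 hyc)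
      have := H n
      linarith
    · intro H n
      have : (0 : ℝ) < 1 / (n + 1) := by positivity
      linarith
  have htend := tendsto_measure_iInter_atTop
    (μ := expFam μ A h (Function.invFun B x))
    (s := fun n : ℕ => Set.Iic (c + 1 / (n + 1 : ℝ)))
    (fun n => measurableSet_Iic.nullMeasurableSet) hanti ⟨0, measure_ne_top _ _⟩
  rw [hInter] at htend
  refine ge_of_tendsto htend (Eventually.of_forall fun n => ?_)
  have hclt : c < c + 1 / (n + 1 : ℝ) := lt_add_of_pos_right c (by positivity)
  obtain ⟨t, htT, htlt⟩ := exists_lt_of_csInf_lt hTne hclt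
  exact le_trans htT.2 (measure_mono (Set.Iic_subset_Iic.2 htlt.le))

end Quantile



lemma QmAux_eq (μ : Measure ℝ) (A h B : ℝ → ℝ) (S : Set ℝ)
    (hB : StrictMono B) (hSB : S ⊆ Set.range B)
    (hprob : ∀ x ∈ S, IsProbabilityMeasure (expFam μ A h (Function.invFun B x)))
    {x u : ℝ} (hx : x ∈ S) (hu0 : 0 < u) (hu1 : u < 1) :
    QmAux μ A h B S x u = qtl μ A h B x u := by
  have hpsi_eq : ∀ q : ℝ, q < 1 → psiAux μ A h B S q x = ENNReal.ofReal (qtl μ A h B x q) := by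
    intro q hq1
    apply le_antisymm
    · exact iSup_le fun p =>
        ENNReal.ofReal_le_ofReal (qtl_mono_x μ A h B S hB hSB hprob hq1 p.2.1 hx p.2.2)
    · exact le_iSup_of_le ⟨x, hx, le_rfl⟩ le_rfl
  have hbranch : (fun q : ℚ => if 0 < (q : ℝ) ∧ (q : ℝ) < u then psiAux μ A h B S q x else 0)
      = fun q : ℚ => if 0 < (q : ℝ) ∧ (q : ℝ) < u then ENNReal.ofReal (qtl μ A h B x q)
        else 0 := by
    funext q
    split_ifs with hq
    · exact hpsi_eq q (hq.2.trans hu1)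
    · rfl
  unfold QmAux
  rw [hbranch]
  set M := ⨆ q : ℚ, if 0 < (q : ℝ) ∧ (q : ℝ) < u then ENNReal.ofReal (qtl μ A h B x q) else 0
    with hM
  have hMle : M ≤ ENNReal.ofReal (qtl μ A h B x u) := by
    refine iSup_le fun q => ?_
    split_ifs with hq
    · exact ENNReal.ofReal_le_ofReal (qtl_mono_u μ A h B S hprob hx hq.2.le hu1)
    · exact zero_le
  have hMne : M ≠ ⊤ := ne_top_of_le_ne_top ENNReal.ofReal_ne_top hMle
  have hqle : ∀ q : ℚ, 0 < (q : ℝ) → (q : ℝ) < u → qtl μ A h B x (q : ℝ) ≤ M.toReal := by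
    intro q hq0 hqu
    have h1 : ENNReal.ofReal (qtl μ A h B x (q : ℝ)) ≤ M := by
      refine le_trans ?_ (le_iSup _ q)
      rw [if_pos ⟨hq0, hqu⟩]
    exact (ENNReal.ofReal_le_iff_le_toReal hMne).1 h1
  have hFM : ENNReal.ofReal u
      ≤ expFam μ A h (Function.invFun B x) (Set.Iic M.toReal) := by
    have hseq : ∀ n : ℕ, ∃ q : ℚ, max (u - 1 / (n + 1 : ℝ)) (u / 2) < (q : ℝ) ∧ (q : ℝ) < u := by
      intro n
      refine exists_rat_btwn (max_lt ?_ ?_)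
      · have : (0 : ℝ) < 1 / (n + 1 : ℝ) := by positivity
        linarith
      · linarith
    choose qs hq1 hq2 using hseq
    have hq0 : ∀ n, 0 < ((qs n : ℝ)) := by
      intro n
      have : (0 : ℝ) < u / 2 := by linarith
      exact lt_of_le_of_lt (le_trans this.le (le_max_right _ _)) (hq1 n)
    have hle : ∀ n, ENNReal.ofReal ((qs n : ℝ))
        ≤ expFam μ A h (Function.invFun B x) (Set.Iic M.toReal) := by
      intro n
      refine le_trans (qtl_attain μ A h B S hprob hx ((hq2 n).trans hu1)) ?_
      exact measure_mono (Set.Iic_subset_Iic.2 (hqle (qs n) (hq0 n) (hq2 n)))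
    have hlow : Tendsto (fun n : ℕ => max (u - 1 / (n + 1 : ℝ)) (u / 2)) atTop
        (𝓝 (max (u - 0) (u / 2))) :=
      Tendsto.max (tendsto_const_nhds.sub tendsto_one_div_add_atTop_nhds_zero_nat)
        tendsto_const_nhds
    have hmax : max (u - 0) (u / 2) = u := by
      rw [sub_zero]
      exact max_eq_left (by linarith)
    rw [hmax] at hlow
    have htends : Tendsto (fun n : ℕ => ((qs n : ℝ))) atTop (𝓝 u) :=
      tendsto_of_tendsto_of_tendsto_of_le_of_le hlow tendsto_const_nhds
        (fun n => (hq1 n).le) (fun n => (hq2 n).le)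
    have hofreal : Tendsto (fun n : ℕ => ENNReal.ofReal ((qs n : ℝ))) atTop
        (𝓝 (ENNReal.ofReal u)) := (ENNReal.continuous_ofReal.tendsto u).comp htends
    exact le_of_tendsto hofreal (Eventually.of_forall hle)
  have hcle : qtl μ A h B x u ≤ M.toReal :=
    csInf_le ⟨0, fun t ht => ht.1⟩ ⟨ENNReal.toReal_nonneg, hFM⟩
  exact le_antisymm (ENNReal.toReal_le_of_le_ofReal (qtl_nonneg μ A h B x u) hMle) hcle

section Fam

variable {Ω : Type*}

def fam0 (X₁ : Ω → ℝ) (U ξ : ℕ → Ω → ℝ) : (Unit ⊕ ℕ ⊕ ℕ) → Ω → ℝ :=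
  Sum.elim (fun _ => X₁) (Sum.elim (fun k => U (k+1)) (fun k => ξ (k+1)))

def fam1 (μ : Measure ℝ) (A h B : ℝ → ℝ) (g : ℝ → ℝ → ℝ) (S : Set ℝ)
    (X₁ : Ω → ℝ) (U ξ : ℕ → Ω → ℝ) : (Unit ⊕ ℕ ⊕ ℕ) → Ω → ℝ :=
  Sum.elim (fun _ => fun ω => irfmAux μ A h B g S (U 1 ω) (X₁ ω))
    (Sum.elim (fun k => U (k+2)) (fun k => ξ (k+2)))

def embed : ((Unit ⊕ ℕ ⊕ ℕ) → ℝ) → ℝ × (ℕ → ℝ) × (ℕ → ℝ) :=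
  fun f => (f (Sum.inl ()), fun k => f (Sum.inr (Sum.inl k)), fun k => f (Sum.inr (Sum.inr k)))

lemma measurable_embed : Measurable embed :=
  (measurable_pi_apply _).prodMk ((measurable_pi_lambda _ fun _ => measurable_pi_apply _).prodMk
    (measurable_pi_lambda _ fun _ => measurable_pi_apply _))

def r0 : (Unit ⊕ ℕ ⊕ ℕ) → (Unit ⊕ ℕ ⊕ ℕ) :=
  Sum.elim (fun _ => Sum.inl ())
    (Sum.elim (fun k => Sum.inr (Sum.inl (k+1))) (fun k => Sum.inr (Sum.inr (k+1))))

def r1 : (Unit ⊕ ℕ ⊕ ℕ) → (Unit ⊕ ℕ ⊕ ℕ) :=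
  Sum.elim (fun _ => Sum.inl ())
    (Sum.elim (fun k => Sum.inr (Sum.inl (k+2))) (fun k => Sum.inr (Sum.inr (k+2))))

def rinv1 : (Unit ⊕ ℕ ⊕ ℕ) → (Unit ⊕ ℕ ⊕ ℕ) :=
  Sum.elim (fun _ => Sum.inl ())
    (Sum.elim (fun k => Sum.inr (Sum.inl (k-1))) (fun k => Sum.inr (Sum.inr (k-1))))

def rinv2 : (Unit ⊕ ℕ ⊕ ℕ) → (Unit ⊕ ℕ ⊕ ℕ) :=
  Sum.elim (fun _ => Sum.inl ())
    (Sum.elim (fun k => Sum.inr (Sum.inl (k-2))) (fun k => Sum.inr (Sum.inr (k-2))))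

lemma rinv1_r0 : ∀ i, rinv1 (r0 i) = i := by
  rintro (⟨⟩ | k | k) <;> simp [r0, rinv1]

lemma rinv2_r1 : ∀ i, rinv2 (r1 i) = i := by
  rintro (⟨⟩ | k | k) <;> simp [r1, rinv2]

def nuF (π : Measure ℝ) : (Unit ⊕ ℕ ⊕ ℕ) → Measure ℝ :=
  Sum.elim (fun _ => π) (Sum.elim (fun _ => unif01) (fun _ => unif01))

end Fam

end
end AuxLemmas

/-- under the contraction condition, if the chain starts from its unique
stationary distribution `π` (i.e. `X₁ ∼ π`), then the observation process
`Y_t = F_{X_t}⁻¹(ξ_t)` (with `{ξ_t}` iid Uniform(0,1) independent of `{X_t}`)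
is a strictly stationary time series. -/
theorem stmt5 {Ω : Type*} [MeasurableSpace Ω] (P : Measure Ω) [IsProbabilityMeasure P]
    (μ : Measure ℝ) [SigmaFinite μ] (A h B : ℝ → ℝ)
    (hB : StrictMono B) (hAB : ∀ η, HasDerivAt A (B η) η)
    (g : ℝ → ℝ → ℝ) (a b : ℝ) (ha : 0 ≤ a) (hb : 0 ≤ b) (hab : a + b < 1)
    (hcontr : ∀ x x' y y' : ℝ, 0 ≤ x → 0 ≤ x' → 0 ≤ y → 0 ≤ y' →
      |g x y - g x' y'| ≤ a * |x - x'| + b * |y - y'|)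
    (hgnn : ∀ x y, 0 ≤ x → 0 ≤ y → 0 ≤ g x y)
    (S : Set ℝ) (hS0 : S ⊆ Set.Ici 0) (hSB : S ⊆ Set.range B)
    (hSg : ∀ x ∈ S, ∀ y, 0 ≤ y → g x y ∈ S)
    (hfamsupp : ∀ η, expFam μ A h η (Set.Iio 0) = 0)
    (hprob : ∀ x ∈ S, IsProbabilityMeasure (expFam μ A h (Function.invFun B x)))
    (hmean : ∀ x ∈ S, ∫ y, y ∂expFam μ A h (Function.invFun B x) = x)
    (X₁ : Ω → ℝ) (U ξ : ℕ → Ω → ℝ)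
    (hX₁meas : Measurable X₁) (hU : ∀ n, Measurable (U n)) (hξ : ∀ n, Measurable (ξ n))
    (hUlaw : ∀ n, Measure.map (U n) P = unif01)
    (hξlaw : ∀ n, Measure.map (ξ n) P = unif01)
    (hindep : ProbabilityTheory.iIndepFun
      (Sum.elim (fun _ : Unit => X₁) (Sum.elim U ξ)) P)
    (π : Measure ℝ) (hπ : IsProbabilityMeasure π) (hπsupp : π Sᶜ = 0)
    (hπstat : IsStationaryDist μ A h B g π)
    (hπuniq : ∀ π' : Measure ℝ, IsProbabilityMeasure π' → π' Sᶜ = 0 →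
      IsStationaryDist μ A h B g π' → π' = π)
    (hX₁law : Measure.map X₁ P = π) :
    ∀ n : ℕ,
      Measure.map (fun ω => fun t : ℕ =>
        qtl μ A h B (fwd μ A h B g U (t + n) (X₁ ω) ω) (ξ (t + 1 + n) ω)) P =
      Measure.map (fun ω => fun t : ℕ =>
        qtl μ A h B (fwd μ A h B g U t (X₁ ω) ω) (ξ (t + 1) ω)) P := by
  intro n
  classical
  -- basic instances and measurability
  have hunif : IsProbabilityMeasure unif01 := by
    constructor
    show (volume.restrict (Set.Ioo (0:ℝ) 1)) Set.univ = 1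
    rw [Measure.restrict_apply_univ, Real.volume_Ioo]
    norm_num
  haveI := hπ
  haveI := hunif
  have hgm : Measurable (fun p : ℝ × ℝ => gmAux g p.1 p.2) := measurable_gmAux g a b ha hb hcontr
  have hQ : Measurable (fun p : ℝ × ℝ => QmAux μ A h B S p.1 p.2) := measurable_QmAux μ A h B S
  have hΦ : Measurable (PhiMap μ A h B g S) := measurable_PhiMap μ A h B g S hgm
  have hirfm_pair : Measurable (fun p : ℝ × ℝ => irfmAux μ A h B g S p.2 p.1) :=
    hgm.comp (measurable_fst.prodMk hQ)
  -- the good a.e. event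
  obtain ⟨N, hSN, hNmeas, hNnull⟩ := exists_measurable_superset_of_null hπsupp
  have hXS : ∀ᵐ ω ∂P, X₁ ω ∈ S := by
    have hN0 : P (X₁ ⁻¹' N) = 0 := by
      rw [← Measure.map_apply hX₁meas hNmeas, hX₁law]; exact hNnull
    rw [ae_iff]
    exact measure_mono_null (fun ω hω => hSN hω) hN0
  have hUIoo : ∀ᵐ ω ∂P, ∀ k, U k ω ∈ Set.Ioo (0:ℝ) 1 := by
    rw [ae_all_iff]
    intro k
    rw [ae_iff]
    have h1 : {ω | ¬ U k ω ∈ Set.Ioo (0:ℝ) 1} = U k ⁻¹' (Set.Ioo (0:ℝ) 1)ᶜ := rfl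
    rw [h1, ← Measure.map_apply (hU k) measurableSet_Ioo.compl, hUlaw k]
    show (volume.restrict (Set.Ioo (0:ℝ) 1)) (Set.Ioo (0:ℝ) 1)ᶜ = 0
    rw [Measure.restrict_apply measurableSet_Ioo.compl, Set.compl_inter_self, measure_empty]
  have hξIoo : ∀ᵐ ω ∂P, ∀ k, ξ k ω ∈ Set.Ioo (0:ℝ) 1 := by
    rw [ae_all_iff]
    intro k
    rw [ae_iff]
    have h1 : {ω | ¬ ξ k ω ∈ Set.Ioo (0:ℝ) 1} = ξ k ⁻¹' (Set.Ioo (0:ℝ) 1)ᶜ := rfl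
    rw [h1, ← Measure.map_apply (hξ k) measurableSet_Ioo.compl, hξlaw k]
    show (volume.restrict (Set.Ioo (0:ℝ) 1)) (Set.Ioo (0:ℝ) 1)ᶜ = 0
    rw [Measure.restrict_apply measurableSet_Ioo.compl, Set.compl_inter_self, measure_empty]
  have hgood := hXS.and (hUIoo.and hξIoo)
  -- on the good event, fwd agrees with dIter and stays in S
  have hfwd : ∀ ω, X₁ ω ∈ S → (∀ k, U k ω ∈ Set.Ioo (0:ℝ) 1) → ∀ t : ℕ,
      fwd μ A h B g U t (X₁ ω) ω ∈ S ∧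
      fwd μ A h B g U t (X₁ ω) ω = dIter μ A h B g S (fun k => U (k+1) ω) t (X₁ ω) := by
    intro ω hX hU' t
    induction t with
    | zero => exact ⟨hX, rfl⟩
    | succ m ih =>
      obtain ⟨hmS, hmeq⟩ := ih
      have hu := hU' (m+1)
      have hq : QmAux μ A h B S (fwd μ A h B g U m (X₁ ω) ω) (U (m+1) ω)
          = qtl μ A h B (fwd μ A h B g U m (X₁ ω) ω) (U (m+1) ω) :=
        QmAux_eq μ A h B S hB hSB hprob hmS hu.1 hu.2
      constructor
      · show irf μ A h B g (U (m+1) ω) (fwd μ A h B g U m (X₁ ω) ω) ∈ S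
        exact hSg _ hmS _ (qtl_nonneg μ A h B _ _)
      · show irf μ A h B g (U (m+1) ω) (fwd μ A h B g U m (X₁ ω) ω)
          = irfmAux μ A h B g S (U (m+1) ω) (dIter μ A h B g S (fun k => U (k+1) ω) m (X₁ ω))
        rw [← hmeq]
        show g (fwd μ A h B g U m (X₁ ω) ω)
            (qtl μ A h B (fwd μ A h B g U m (X₁ ω) ω) (U (m+1) ω))
          = gmAux g (fwd μ A h B g U m (X₁ ω) ω)
            (QmAux μ A h B S (fwd μ A h B g U m (X₁ ω) ω) (U (m+1) ω))
        rw [hq, gmAux, max_eq_left (hS0 hmS), max_eq_left (qtl_nonneg μ A h B _ _)]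
  -- sequences agree a.e. with the measurable model
  have hseq_eq : ∀ m : ℕ,
      (fun ω => fun t : ℕ => qtl μ A h B (fwd μ A h B g U (t+m) (X₁ ω) ω) (ξ (t+1+m) ω))
      =ᵐ[P] (fun ω => fun t : ℕ =>
        PhiMap μ A h B g S (X₁ ω, fun k => U (k+1) ω, fun k => ξ (k+1) ω) (t+m)) := by
    intro m
    filter_upwards [hgood] with ω hω
    obtain ⟨hX, hU', hξ'⟩ := hω
    funext t
    obtain ⟨hS', heq⟩ := hfwd ω hX hU' (t+m)
    show qtl μ A h B (fwd μ A h B g U (t+m) (X₁ ω) ω) (ξ (t+1+m) ω)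
      = QmAux μ A h B S (dIter μ A h B g S (fun k => U (k+1) ω) (t+m) (X₁ ω)) (ξ ((t+m)+1) ω)
    have hidx : t+1+m = (t+m)+1 := by omega
    rw [hidx, ← heq]
    have hxi := hξ' ((t+m)+1)
    exact (QmAux_eq μ A h B S hB hSB hprob hS' hxi.1 hxi.2).symm
  have hseq0 := hseq_eq 0
  simp only [Nat.add_zero] at hseq0
  rw [Measure.map_congr (hseq_eq n), Measure.map_congr hseq0]
  -- reduce to shift invariance of the law of the measurable model
  have hT0meas : Measurable (fun ω =>
      ((X₁ ω, fun k => U (k+1) ω, fun k => ξ (k+1) ω) : ℝ × (ℕ → ℝ) × (ℕ → ℝ))) :=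
    hX₁meas.prodMk ((measurable_pi_lambda _ fun k => hU (k+1)).prodMk
      (measurable_pi_lambda _ fun k => hξ (k+1)))
  have hcomp0 : Measurable (fun ω =>
      PhiMap μ A h B g S (X₁ ω, fun k => U (k+1) ω, fun k => ξ (k+1) ω)) := hΦ.comp hT0meas
  have hshift : ∀ m : ℕ, Measurable (fun s : ℕ → ℝ => fun t : ℕ => s (t+m)) :=
    fun m => measurable_pi_lambda _ fun t => measurable_pi_apply (t+m)
  have hmapshift : ∀ m : ℕ,
      Measure.map (fun ω => fun t : ℕ =>
        PhiMap μ A h B g S (X₁ ω, fun k => U (k+1) ω, fun k => ξ (k+1) ω) (t+m)) P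
      = Measure.map (fun s : ℕ → ℝ => fun t : ℕ => s (t+m))
          (Measure.map (fun ω =>
            PhiMap μ A h B g S (X₁ ω, fun k => U (k+1) ω, fun k => ξ (k+1) ω)) P) :=
    fun m => (Measure.map_map (hshift m) hcomp0).symm
  -- it suffices to prove invariance under the one-step shift
  suffices hinv1 : Measure.map (fun s : ℕ → ℝ => fun t : ℕ => s (t+1))
      (Measure.map (fun ω =>
        PhiMap μ A h B g S (X₁ ω, fun k => U (k+1) ω, fun k => ξ (k+1) ω)) P)
      = Measure.map (fun ω =>
        PhiMap μ A h B g S (X₁ ω, fun k => U (k+1) ω, fun k => ξ (k+1) ω)) P by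
    have hinvm : ∀ m : ℕ, Measure.map (fun s : ℕ → ℝ => fun t : ℕ => s (t+m))
        (Measure.map (fun ω =>
          PhiMap μ A h B g S (X₁ ω, fun k => U (k+1) ω, fun k => ξ (k+1) ω)) P)
        = Measure.map (fun ω =>
          PhiMap μ A h B g S (X₁ ω, fun k => U (k+1) ω, fun k => ξ (k+1) ω)) P := by
      intro m
      induction m with
      | zero =>
        rw [show (fun s : ℕ → ℝ => fun t : ℕ => s (t+0)) = id from rfl, Measure.map_id]
      | succ m ih =>
        rw [show (fun s : ℕ → ℝ => fun t : ℕ => s (t+(m+1)))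
            = (fun s : ℕ → ℝ => fun t : ℕ => s (t+m)) ∘ (fun s : ℕ → ℝ => fun t : ℕ => s (t+1))
            from rfl,
          ← Measure.map_map (hshift m) (hshift 1), hinv1, ih]
    rw [hmapshift n, hinvm n]
  -- CORE: one-step shift invariance
  have hX₂meas : Measurable (fun ω => irfmAux μ A h B g S (U 1 ω) (X₁ ω)) :=
    hirfm_pair.comp (hX₁meas.prodMk (hU 1))
  have horigmeas : ∀ i : Unit ⊕ ℕ ⊕ ℕ,
      Measurable ((Sum.elim (fun _ : Unit => X₁) (Sum.elim U ξ)) i) := by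
    rintro (⟨⟩ | k | k)
    exacts [hX₁meas, hU k, hξ k]
  have hX₂law : Measure.map (fun ω => irfmAux μ A h B g S (U 1 ω) (X₁ ω)) P = π := by
    have hIndXU : ProbabilityTheory.IndepFun X₁ (U 1) P :=
      hindep.indepFun (show (Sum.inl () : Unit ⊕ ℕ ⊕ ℕ) ≠ Sum.inr (Sum.inl 1) by simp)
    have hpair : Measure.map (fun ω => (X₁ ω, U 1 ω)) P = π.prod unif01 := by
      rw [(ProbabilityTheory.indepFun_iff_map_prod_eq_prod_map_map hX₁meas.aemeasurable
        (hU 1).aemeasurable).1 hIndXU, hX₁law, hUlaw]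
    have hstep : (fun ω => irfmAux μ A h B g S (U 1 ω) (X₁ ω))
        = (fun p : ℝ × ℝ => irfmAux μ A h B g S p.2 p.1) ∘ (fun ω => (X₁ ω, U 1 ω)) := rfl
    rw [hstep, ← Measure.map_map hirfm_pair (hX₁meas.prodMk (hU 1)), hpair]
    have haeeq : (fun p : ℝ × ℝ => irfmAux μ A h B g S p.2 p.1)
        =ᵐ[π.prod unif01] (fun p : ℝ × ℝ => irf μ A h B g p.2 p.1) := by
      have hbad : (π.prod unif01) ((N ×ˢ (Set.univ : Set ℝ))
          ∪ ((Set.univ : Set ℝ) ×ˢ (Set.Ioo (0:ℝ) 1)ᶜ)) = 0 := by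
        refine measure_union_null ?_ ?_
        · rw [Measure.prod_prod, hNnull, zero_mul]
        · rw [Measure.prod_prod]
          have h2 : unif01 (Set.Ioo (0:ℝ) 1)ᶜ = 0 := by
            show (volume.restrict (Set.Ioo (0:ℝ) 1)) (Set.Ioo (0:ℝ) 1)ᶜ = 0
            rw [Measure.restrict_apply measurableSet_Ioo.compl, Set.compl_inter_self,
              measure_empty]
          rw [h2, mul_zero]
      rw [Filter.EventuallyEq, ae_iff]
      refine measure_mono_null (fun p hp => ?_) hbad
      simp only [Set.mem_setOf_eq] at hp
      by_contra hpbad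
      apply hp
      simp only [Set.mem_union, Set.mem_prod, Set.mem_univ, and_true, true_and,
        Set.mem_compl_iff, not_or] at hpbad
      obtain ⟨h1, h2⟩ := hpbad
      rw [not_not] at h2
      have hpS : p.1 ∈ S := by
        by_contra hc
        exact h1 (hSN hc)
      show gmAux g p.1 (QmAux μ A h B S p.1 p.2) = g p.1 (qtl μ A h B p.1 p.2)
      rw [QmAux_eq μ A h B S hB hSB hprob hpS h2.1 h2.2, gmAux,
        max_eq_left (hS0 hpS), max_eq_left (qtl_nonneg μ A h B _ _)]
    rw [Measure.map_congr haeeq]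
    exact hπstat
  -- the two families have the same marginals
  have hfam0meas : ∀ i, Measurable (fam0 X₁ U ξ i) := by
    rintro (⟨⟩ | k | k)
    exacts [hX₁meas, hU (k+1), hξ (k+1)]
  have hfam1meas : ∀ i, Measurable (fam1 μ A h B g S X₁ U ξ i) := by
    rintro (⟨⟩ | k | k)
    exacts [hX₂meas, hU (k+2), hξ (k+2)]
  have hmarg0 : ∀ i, Measure.map (fam0 X₁ U ξ i) P = nuF π i := by
    rintro (⟨⟩ | k | k)
    exacts [hX₁law, hUlaw (k+1), hξlaw (k+1)]
  have hmarg1 : ∀ i, Measure.map (fam1 μ A h B g S X₁ U ξ i) P = nuF π i := by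
    rintro (⟨⟩ | k | k)
    exacts [hX₂law, hUlaw (k+2), hξlaw (k+2)]
  have hfam0r : ∀ i, fam0 X₁ U ξ i = (Sum.elim (fun _ : Unit => X₁) (Sum.elim U ξ)) (r0 i) := by
    rintro (⟨⟩ | k | k) <;> rfl
  have hfam1r : ∀ i, i ≠ Sum.inl () →
      fam1 μ A h B g S X₁ U ξ i = (Sum.elim (fun _ : Unit => X₁) (Sum.elim U ξ)) (r1 i) := by
    rintro (⟨⟩ | k | k) hne
    · exact absurd rfl hne
    · rfl
    · rfl
  -- cylinder probabilities
  have hcyl0 : ∀ (s : Finset (Unit ⊕ ℕ ⊕ ℕ)) (A' : (Unit ⊕ ℕ ⊕ ℕ) → Set ℝ),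
      (∀ i ∈ s, MeasurableSet (A' i)) →
      P (⋂ i ∈ s, fam0 X₁ U ξ i ⁻¹' A' i) = ∏ i ∈ s, nuF π i (A' i) := by
    intro s A' hA'
    have h1 : (⋂ i ∈ s, fam0 X₁ U ξ i ⁻¹' A' i)
        = ⋂ i ∈ s, (Sum.elim (fun _ : Unit => X₁) (Sum.elim U ξ)) (r0 i) ⁻¹' A' i :=
      Set.iInter₂_congr fun i _ => by rw [hfam0r]
    rw [h1, indep_cyl hindep r0 rinv1 rinv1_r0 s A' hA']
    refine Finset.prod_congr rfl fun i hi => ?_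
    rw [← hfam0r i, ← Measure.map_apply (hfam0meas i) (hA' i hi), hmarg0 i]
  have hcyl1 : ∀ (s : Finset (Unit ⊕ ℕ ⊕ ℕ)) (A' : (Unit ⊕ ℕ ⊕ ℕ) → Set ℝ),
      (∀ i ∈ s, MeasurableSet (A' i)) →
      P (⋂ i ∈ s, fam1 μ A h B g S X₁ U ξ i ⁻¹' A' i) = ∏ i ∈ s, nuF π i (A' i) := by
    intro s A' hA'
    by_cases hmem : (Sum.inl () : Unit ⊕ ℕ ⊕ ℕ) ∈ s
    · have hsplit : (⋂ i ∈ s, fam1 μ A h B g S X₁ U ξ i ⁻¹' A' i)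
          = (fam1 μ A h B g S X₁ U ξ (Sum.inl ()) ⁻¹' A' (Sum.inl ()))
            ∩ ⋂ i ∈ s.erase (Sum.inl ()), fam1 μ A h B g S X₁ U ξ i ⁻¹' A' i := by
        conv_lhs => rw [← Finset.insert_erase hmem]
        rw [Finset.set_biInter_insert]
      have hmemS1 : (Sum.inl () : Unit ⊕ ℕ ⊕ ℕ)
          ∈ ({Sum.inl (), Sum.inr (Sum.inl 1)} : Finset (Unit ⊕ ℕ ⊕ ℕ)) := by simp
      have hmemS2 : (Sum.inr (Sum.inl 1) : Unit ⊕ ℕ ⊕ ℕ)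
          ∈ ({Sum.inl (), Sum.inr (Sum.inl 1)} : Finset (Unit ⊕ ℕ ⊕ ℕ)) := by simp
      have hdisj : Disjoint ({Sum.inl (), Sum.inr (Sum.inl 1)} : Finset (Unit ⊕ ℕ ⊕ ℕ))
          ((s.erase (Sum.inl ())).image r1) := by
        rw [Finset.disjoint_left]
        intro x hx hxT
        obtain ⟨i, hi, rfl⟩ := Finset.mem_image.mp hxT
        rcases i with ⟨⟩ | k | k
        · exact (Finset.mem_erase.mp hi).1 rfl
        · simp only [r1, Sum.elim_inr, Sum.elim_inl, Finset.mem_insert, Finset.mem_singleton,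
            Sum.inr.injEq, Sum.inl.injEq, reduceCtorEq, false_or] at hx
          omega
        · simp only [r1, Sum.elim_inr, Sum.elim_inl, Finset.mem_insert, Finset.mem_singleton,
            Sum.inr.injEq, Sum.inl.injEq, reduceCtorEq, false_or, or_self] at hx
      have hIF := hindep.indepFun_finset _ _ hdisj horigmeas
      have hφmeas : Measurable (fun v : (({Sum.inl (), Sum.inr (Sum.inl 1)} :
            Finset (Unit ⊕ ℕ ⊕ ℕ)) → ℝ) =>
          irfmAux μ A h B g S (v ⟨Sum.inr (Sum.inl 1), hmemS2⟩) (v ⟨Sum.inl (), hmemS1⟩)) := by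
        have heq : (fun v : (({Sum.inl (), Sum.inr (Sum.inl 1)} :
              Finset (Unit ⊕ ℕ ⊕ ℕ)) → ℝ) =>
            irfmAux μ A h B g S (v ⟨Sum.inr (Sum.inl 1), hmemS2⟩) (v ⟨Sum.inl (), hmemS1⟩))
            = (fun p : ℝ × ℝ => irfmAux μ A h B g S p.2 p.1)
              ∘ (fun v => (v ⟨Sum.inl (), hmemS1⟩, v ⟨Sum.inr (Sum.inl 1), hmemS2⟩)) := rfl
        rw [heq]
        exact hirfm_pair.comp ((measurable_pi_apply _).prodMk (measurable_pi_apply _))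
      have hDTmeas : MeasurableSet (⋂ i, ⋂ (hi : i ∈ s.erase (Sum.inl ())),
          {v : ((s.erase (Sum.inl ())).image r1 : Finset (Unit ⊕ ℕ ⊕ ℕ)) → ℝ |
            v ⟨r1 i, Finset.mem_image_of_mem r1 hi⟩ ∈ A' i}) :=
        MeasurableSet.iInter fun i => MeasurableSet.iInter fun hi =>
          (measurable_pi_apply _) (hA' i (Finset.mem_of_mem_erase hi))
      have hE0 : fam1 μ A h B g S X₁ U ξ (Sum.inl ()) ⁻¹' A' (Sum.inl ())
          = (fun ω (j : (({Sum.inl (), Sum.inr (Sum.inl 1)} : Finset (Unit ⊕ ℕ ⊕ ℕ)))) =>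
              (Sum.elim (fun _ : Unit => X₁) (Sum.elim U ξ)) j ω)
            ⁻¹' ((fun v : (({Sum.inl (), Sum.inr (Sum.inl 1)} :
                Finset (Unit ⊕ ℕ ⊕ ℕ)) → ℝ) =>
              irfmAux μ A h B g S (v ⟨Sum.inr (Sum.inl 1), hmemS2⟩) (v ⟨Sum.inl (), hmemS1⟩))
              ⁻¹' A' (Sum.inl ())) := rfl
      have hE1 : (⋂ i ∈ s.erase (Sum.inl ()), fam1 μ A h B g S X₁ U ξ i ⁻¹' A' i)
          = (fun ω (j : ((s.erase (Sum.inl ())).image r1 : Finset (Unit ⊕ ℕ ⊕ ℕ))) =>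
              (Sum.elim (fun _ : Unit => X₁) (Sum.elim U ξ)) j ω)
            ⁻¹' (⋂ i, ⋂ (hi : i ∈ s.erase (Sum.inl ())),
              {v : ((s.erase (Sum.inl ())).image r1 : Finset (Unit ⊕ ℕ ⊕ ℕ)) → ℝ |
                v ⟨r1 i, Finset.mem_image_of_mem r1 hi⟩ ∈ A' i}) := by
        ext ω
        simp only [Set.mem_iInter, Set.mem_preimage, Set.mem_setOf_eq]
        constructor
        · intro H i hi
          have := H i hi
          rwa [hfam1r i (Finset.mem_erase.mp hi).1] at this
        · intro H i hi
          rw [hfam1r i (Finset.mem_erase.mp hi).1]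
          exact H i hi
      rw [hsplit, hE0, hE1,
        hIF.measure_inter_preimage_eq_mul _ _ (hφmeas (hA' _ hmem)) hDTmeas]
      have hf1 : P ((fun ω (j : (({Sum.inl (), Sum.inr (Sum.inl 1)} :
              Finset (Unit ⊕ ℕ ⊕ ℕ)))) =>
            (Sum.elim (fun _ : Unit => X₁) (Sum.elim U ξ)) j ω)
          ⁻¹' ((fun v : (({Sum.inl (), Sum.inr (Sum.inl 1)} :
              Finset (Unit ⊕ ℕ ⊕ ℕ)) → ℝ) =>
            irfmAux μ A h B g S (v ⟨Sum.inr (Sum.inl 1), hmemS2⟩) (v ⟨Sum.inl (), hmemS1⟩))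
            ⁻¹' A' (Sum.inl ()))) = π (A' (Sum.inl ())) := by
        rw [← hE0, ← Measure.map_apply (hfam1meas _) (hA' _ hmem), hmarg1]
        rfl
      have hf2 : P ((fun ω (j : ((s.erase (Sum.inl ())).image r1 : Finset (Unit ⊕ ℕ ⊕ ℕ))) =>
            (Sum.elim (fun _ : Unit => X₁) (Sum.elim U ξ)) j ω)
          ⁻¹' (⋂ i, ⋂ (hi : i ∈ s.erase (Sum.inl ())),
            {v : ((s.erase (Sum.inl ())).image r1 : Finset (Unit ⊕ ℕ ⊕ ℕ)) → ℝ |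
              v ⟨r1 i, Finset.mem_image_of_mem r1 hi⟩ ∈ A' i}))
          = ∏ i ∈ s.erase (Sum.inl ()), nuF π i (A' i) := by
        rw [← hE1]
        have h1 : (⋂ i ∈ s.erase (Sum.inl ()), fam1 μ A h B g S X₁ U ξ i ⁻¹' A' i)
            = ⋂ i ∈ s.erase (Sum.inl ()),
              (Sum.elim (fun _ : Unit => X₁) (Sum.elim U ξ)) (r1 i) ⁻¹' A' i :=
          Set.iInter₂_congr fun i hi => by rw [hfam1r i (Finset.mem_erase.mp hi).1]
        rw [h1, indep_cyl hindep r1 rinv2 rinv2_r1 _ A'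
          (fun i hi => hA' i (Finset.mem_of_mem_erase hi))]
        refine Finset.prod_congr rfl fun i hi => ?_
        rw [← hfam1r i (Finset.mem_erase.mp hi).1,
          ← Measure.map_apply (hfam1meas i) (hA' i (Finset.mem_of_mem_erase hi)), hmarg1 i]
      rw [hf1, hf2, ← Finset.mul_prod_erase s (fun i => nuF π i (A' i)) hmem]
      rfl
    · have h1 : (⋂ i ∈ s, fam1 μ A h B g S X₁ U ξ i ⁻¹' A' i)
          = ⋂ i ∈ s, (Sum.elim (fun _ : Unit => X₁) (Sum.elim U ξ)) (r1 i) ⁻¹' A' i :=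
        Set.iInter₂_congr fun i hi => by
          rw [hfam1r i (by rintro rfl; exact hmem hi)]
      rw [h1, indep_cyl hindep r1 rinv2 rinv2_r1 s A' hA']
      refine Finset.prod_congr rfl fun i hi => ?_
      rw [← hfam1r i (by rintro rfl; exact hmem hi),
        ← Measure.map_apply (hfam1meas i) (hA' i hi), hmarg1 i]
  -- equal joint laws
  have hjoint : Measure.map (fun ω i => fam1 μ A h B g S X₁ U ξ i ω) P
      = Measure.map (fun ω i => fam0 X₁ U ξ i ω) P :=
    map_pi_of_cylinders P P _ _ hfam1meas hfam0meas
      (fun s A' hA' => by rw [hcyl1 s A' hA', hcyl0 s A' hA'])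
  have hjm0 : Measurable (fun ω (i : Unit ⊕ ℕ ⊕ ℕ) => fam0 X₁ U ξ i ω) :=
    measurable_pi_lambda _ hfam0meas
  have hjm1 : Measurable (fun ω (i : Unit ⊕ ℕ ⊕ ℕ) => fam1 μ A h B g S X₁ U ξ i ω) :=
    measurable_pi_lambda _ hfam1meas
  have hT0e : Measure.map (fun ω =>
      ((X₁ ω, fun k => U (k+1) ω, fun k => ξ (k+1) ω) : ℝ × (ℕ → ℝ) × (ℕ → ℝ))) P
      = Measure.map embed (Measure.map (fun ω i => fam0 X₁ U ξ i ω) P) :=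
    (Measure.map_map measurable_embed hjm0).symm
  have hT1e : Measure.map (fun ω =>
      ((irfmAux μ A h B g S (U 1 ω) (X₁ ω), fun k => U (k+2) ω, fun k => ξ (k+2) ω)
        : ℝ × (ℕ → ℝ) × (ℕ → ℝ))) P
      = Measure.map embed (Measure.map (fun ω i => fam1 μ A h B g S X₁ U ξ i ω) P) :=
    (Measure.map_map measurable_embed hjm1).symm
  have hTT : Measure.map (fun ω =>
      ((irfmAux μ A h B g S (U 1 ω) (X₁ ω), fun k => U (k+2) ω, fun k => ξ (k+2) ω)
        : ℝ × (ℕ → ℝ) × (ℕ → ℝ))) P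
      = Measure.map (fun ω =>
      ((X₁ ω, fun k => U (k+1) ω, fun k => ξ (k+1) ω) : ℝ × (ℕ → ℝ) × (ℕ → ℝ))) P := by
    rw [hT1e, hjoint, ← hT0e]
  have hT1meas : Measurable (fun ω =>
      ((irfmAux μ A h B g S (U 1 ω) (X₁ ω), fun k => U (k+2) ω, fun k => ξ (k+2) ω)
        : ℝ × (ℕ → ℝ) × (ℕ → ℝ))) :=
    hX₂meas.prodMk ((measurable_pi_lambda _ fun k => hU (k+2)).prodMk
      (measurable_pi_lambda _ fun k => hξ (k+2)))
  have hptwise : ((fun s : ℕ → ℝ => fun t : ℕ => s (t+1)) ∘ (fun ω =>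
      PhiMap μ A h B g S (X₁ ω, fun k => U (k+1) ω, fun k => ξ (k+1) ω)))
      = fun ω => PhiMap μ A h B g S
        (irfmAux μ A h B g S (U 1 ω) (X₁ ω), fun k => U (k+2) ω, fun k => ξ (k+2) ω) := by
    funext ω t
    show QmAux μ A h B S (dIter μ A h B g S (fun k => U (k+1) ω) (t+1) (X₁ ω)) (ξ ((t+1)+1) ω)
      = QmAux μ A h B S
        (dIter μ A h B g S (fun k => U (k+2) ω) t (irfmAux μ A h B g S (U 1 ω) (X₁ ω)))
        (ξ (t+2) ω)
    rw [dIter_succ_shift]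
  calc (Measure.map (fun s : ℕ → ℝ => fun t : ℕ => s (t+1))
      (Measure.map (fun ω =>
        PhiMap μ A h B g S (X₁ ω, fun k => U (k+1) ω, fun k => ξ (k+1) ω)) P))
      = Measure.map ((fun s : ℕ → ℝ => fun t : ℕ => s (t+1)) ∘ (fun ω =>
          PhiMap μ A h B g S (X₁ ω, fun k => U (k+1) ω, fun k => ξ (k+1) ω))) P :=
        Measure.map_map (hshift 1) hcomp0
    _ = Measure.map (fun ω => PhiMap μ A h B g S
          (irfmAux μ A h B g S (U 1 ω) (X₁ ω), fun k => U (k+2) ω, fun k => ξ (k+2) ω)) P := by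
        rw [hptwise]
    _ = Measure.map (PhiMap μ A h B g S) (Measure.map (fun ω =>
          ((irfmAux μ A h B g S (U 1 ω) (X₁ ω), fun k => U (k+2) ω, fun k => ξ (k+2) ω)
            : ℝ × (ℕ → ℝ) × (ℕ → ℝ))) P) :=
        (Measure.map_map hΦ hT1meas).symm
    _ = Measure.map (PhiMap μ A h B g S) (Measure.map (fun ω =>
          ((X₁ ω, fun k => U (k+1) ω, fun k => ξ (k+1) ω) : ℝ × (ℕ → ℝ) × (ℕ → ℝ))) P) := by
        rw [hTT]
    _ = Measure.map (fun ω =>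
          PhiMap μ A h B g S (X₁ ω, fun k => U (k+1) ω, fun k => ξ (k+1) ω)) P :=
        Measure.map_map hΦ hT0meas
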